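/- Let d ≥ 1, let W ⊆ ℝ^d be a compact convex set with nonempty interior, and let κ > 0. Let (w_t)_{t≥0} be an i.i.d. sequence of random vectors on a probability space (Ω, 𝓕, P) whose common law has a density f with f(x) ≥ κ for x ∈ W and f(x) = 0 for x ∉ W. Let M be a nonzero d×d real matrix, and let (Z_k)_{k≥0} be random vectors in ℝ^d such that Z_0 is constant and, for each k ≥ 1, Z_k is measurable with respect to the σ-algebra generated by w_0, …, w_{2k−1}. Then, P-almost surely, the set { k ∈ ℕ : M·w_{2k} + w_{2k+1} + Z_k ∉ W } is infinite. -/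

import Mathlib

open MeasureTheory ProbabilityTheory

/- STATEMENT 8: Conditional Borel–Cantelli-type statement: for i.i.d. noise
`(w_t)` with a density bounded below by `κ > 0` on the compact convex body `W`
and vanishing off `W`, a nonzero matrix `M`, and adapted translates `Z_k`
(with `Z_k` measurable w.r.t. `σ(w_0, …, w_{2k−1})` for `k ≥ 1` and `Z_0`
constant), almost surely `M·w_{2k} + w_{2k+1} + Z_k ∉ W` for infinitely
many `k`. -/
open scoped ENNReal


lemma indep_mono' {Ω : Type*} [MeasurableSpace Ω] {μ : Measure Ω}
    {m₁ m₂ m₁' m₂' : MeasurableSpace Ω}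
    (h : Indep m₁ m₂ μ) (h1 : m₁' ≤ m₁) (h2 : m₂' ≤ m₂) : Indep m₁' m₂' μ := by
  rw [Indep_iff] at h ⊢
  exact fun t1 t2 ht1 ht2 => h t1 t2 (h1 _ ht1) (h2 _ ht2)

lemma tail_pos' {d : ℕ} (W : Set (Fin d → ℝ)) (hWc : IsCompact W) (hWconv : Convex ℝ W)
    (hWint : (interior W).Nonempty)
    {κ : ℝ} (hκ : 0 < κ) (f : (Fin d → ℝ) → ℝ) (hfW : ∀ x ∈ W, κ ≤ f x)
    (g : (Fin d → ℝ) →ₗ[ℝ] ℝ) {c : ℝ}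
    (hc : sInf (g '' W) < c) :
    0 < (volume.withDensity fun x => ENNReal.ofReal (f x)) {x | g x < c} := by
  obtain ⟨x₀, hx₀⟩ := hWint
  have hgcont : Continuous g := g.continuous_of_finiteDimensional
  -- find x₁ ∈ W with g x₁ < c
  obtain ⟨y, hy, hyc⟩ := exists_lt_of_csInf_lt (Set.Nonempty.image g ⟨x₀, interior_subset hx₀⟩) hc
  obtain ⟨x₁, hx₁W, rfl⟩ := hy
  -- move slightly towards the interior point x₀
  set D : ℝ := |g (x₀ - x₁)| with hD
  have hDpos : 0 < D + 1 := by positivity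
  set t : ℝ := min 1 ((c - g x₁) / (2 * (D + 1))) with ht
  have htpos : 0 < t := by
    apply lt_min one_pos
    apply div_pos (by linarith) (by linarith)
  have ht1 : t ≤ 1 := min_le_left _ _
  have hxt : x₁ + t • (x₀ - x₁) ∈ interior W :=
    hWconv.add_smul_sub_mem_interior hx₁W hx₀ ⟨htpos, ht1⟩
  have hgxt : g (x₁ + t • (x₀ - x₁)) < c := by
    have h1 : g (x₁ + t • (x₀ - x₁)) = g x₁ + t * g (x₀ - x₁) := by
      simp [map_add, LinearMap.map_smul, smul_eq_mul]
    rw [h1]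
    have h2 : t * g (x₀ - x₁) ≤ t * D := by
      apply mul_le_mul_of_nonneg_left (le_abs_self _) htpos.le
    have h3 : t * D ≤ (c - g x₁) / (2 * (D + 1)) * D := by
      apply mul_le_mul_of_nonneg_right (min_le_right _ _) (abs_nonneg _)
    have h4 : (c - g x₁) / (2 * (D + 1)) * D < c - g x₁ := by
      rw [div_mul_eq_mul_div, div_lt_iff₀ (by linarith)]
      have hDD : D ≤ D + 1 := by linarith
      nlinarith [abs_nonneg (g (x₀ - x₁))]
    linarith
  -- the open set
  set s : Set (Fin d → ℝ) := interior W ∩ {x | g x < c} with hs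
  have hsopen : IsOpen s := isOpen_interior.inter (isOpen_lt hgcont continuous_const)
  have hsne : s.Nonempty := ⟨x₁ + t • (x₀ - x₁), hxt, hgxt⟩
  have hsub : s ⊆ {x | g x < c} := Set.inter_subset_right
  have hsmeas : MeasurableSet s := hsopen.measurableSet
  have hμs : 0 < (volume.withDensity fun x => ENNReal.ofReal (f x)) s := by
    rw [withDensity_apply _ hsmeas]
    calc (0 : ℝ≥0∞) < ENNReal.ofReal κ * volume s := by
          apply ENNReal.mul_pos
          · simp [ENNReal.ofReal_pos, hκ]
          · exact (hsopen.measure_pos volume hsne).ne'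
      _ = ∫⁻ _ in s, ENNReal.ofReal κ ∂volume := by rw [setLIntegral_const, mul_comm]
      _ ≤ ∫⁻ x in s, ENNReal.ofReal (f x) ∂volume := by
          apply lintegral_mono_ae
          filter_upwards [ae_restrict_mem hsmeas] with x hx
          exact ENNReal.ofReal_le_ofReal (hfW x (interior_subset hx.1))
  exact hμs.trans_le (measure_mono hsub)

lemma width_pos' {d : ℕ} (W : Set (Fin d → ℝ)) (hWc : IsCompact W)
    (hWint : (interior W).Nonempty)
    (g : (Fin d → ℝ) →ₗ[ℝ] ℝ) {u : Fin d → ℝ} (hu : g u ≠ 0) :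
    sInf (g '' W) < sSup (g '' W) := by
  have hgcont : Continuous g := g.continuous_of_finiteDimensional
  obtain ⟨x₀, hx₀⟩ := hWint
  obtain ⟨r, hr, hball⟩ := Metric.isOpen_iff.mp isOpen_interior x₀ hx₀
  have hune : u ≠ 0 := by rintro rfl; simp at hu
  have hnu : 0 < ‖u‖ := norm_pos_iff.mpr hune
  set c : ℝ := r / (2 * ‖u‖) with hc
  have hcpos : 0 < c := by positivity
  have hmem : ∀ e : ℝ, |e| = c → x₀ + e • u ∈ W := by
    intro e he
    apply interior_subset (hball ?_)
    rw [Metric.mem_ball, dist_eq_norm, add_sub_cancel_left, norm_smul, Real.norm_eq_abs, he]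
    rw [hc, div_mul_eq_mul_div, div_lt_iff₀ (by positivity)]
    nlinarith
  have h₁ : x₀ + c • u ∈ W := hmem c (abs_of_pos hcpos)
  have h₂ : x₀ + (-c) • u ∈ W := hmem (-c) (by rw [abs_neg, abs_of_pos hcpos])
  have hbdd : BddAbove (g '' W) := (hWc.image hgcont).bddAbove
  have hbdd' : BddBelow (g '' W) := (hWc.image hgcont).bddBelow
  have e₁ : g (x₀ + c • u) = g x₀ + c * g u := by
    simp [map_add, LinearMap.map_smul, smul_eq_mul]
  have e₂ : g (x₀ + (-c) • u) = g x₀ - c * g u := by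
    simp [map_add, LinearMap.map_smul, smul_eq_mul]; ring
  have hle₁ : g (x₀ + c • u) ≤ sSup (g '' W) := le_csSup hbdd ⟨_, h₁, rfl⟩
  have hle₂ : g (x₀ + (-c) • u) ≤ sSup (g '' W) := le_csSup hbdd ⟨_, h₂, rfl⟩
  have hge₁ : sInf (g '' W) ≤ g (x₀ + c • u) := csInf_le hbdd' ⟨_, h₁, rfl⟩
  have hge₂ : sInf (g '' W) ≤ g (x₀ + (-c) • u) := csInf_le hbdd' ⟨_, h₂, rfl⟩
  rcases lt_or_gt_of_ne (mul_ne_zero hcpos.ne' hu) with h | h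
  · -- c * g u < 0
    calc sInf (g '' W) ≤ g x₀ + c * g u := by rw [← e₁]; exact hge₁
      _ < g x₀ - c * g u := by linarith
      _ ≤ sSup (g '' W) := by rw [← e₂]; exact hle₂
  · calc sInf (g '' W) ≤ g x₀ - c * g u := by rw [← e₂]; exact hge₂
      _ < g x₀ + c * g u := by linarith
      _ ≤ sSup (g '' W) := by rw [← e₁]; exact hle₁


theorem residual_misfits_infinitely_often
    {Ω : Type*} [MeasurableSpace Ω] (P : Measure Ω) [IsProbabilityMeasure P]
    (d : ℕ) (hd : 1 ≤ d) (W : Set (Fin d → ℝ))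
    (hWc : IsCompact W) (hWconv : Convex ℝ W) (hWint : (interior W).Nonempty)
    (κ : ℝ) (hκ : 0 < κ)
    (w : ℕ → Ω → Fin d → ℝ) (hw : ∀ t, Measurable (w t))
    (hindep : iIndepFun w P)
    (f : (Fin d → ℝ) → ℝ)
    (hlaw : ∀ t, P.map (w t) = volume.withDensity fun x => ENNReal.ofReal (f x))
    (hfW : ∀ x ∈ W, κ ≤ f x) (hf0 : ∀ x ∉ W, f x = 0)
    (M : Matrix (Fin d) (Fin d) ℝ) (hM : M ≠ 0)
    (Z : ℕ → Ω → Fin d → ℝ)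
    (hZ0 : ∃ c, ∀ ω, Z 0 ω = c)
    (hZ : ∀ k, 1 ≤ k →
      Measurable[⨆ i ∈ Finset.range (2 * k), MeasurableSpace.comap (w i)
        inferInstance] (Z k)) :
    ∀ᵐ ω ∂P,
      {k : ℕ | M.mulVec (w (2 * k) ω) + w (2 * k + 1) ω + Z k ω ∉ W}.Infinite := by
  classical
  set ν₀ : Measure (Fin d → ℝ) := volume.withDensity fun x => ENNReal.ofReal (f x) with hν₀
  haveI hprob0 : IsProbabilityMeasure ν₀ := by
    rw [← hlaw 0]; exact Measure.isProbabilityMeasure_map (hw 0).aemeasurable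
  -- nonzero entry of M
  obtain ⟨i, j, hij⟩ : ∃ i j, M i j ≠ 0 := by
    by_contra h
    push_neg at h
    exact hM (by ext i j; simp [h])
  -- linear functionals
  set ψ : (Fin d → ℝ) →ₗ[ℝ] ℝ := (LinearMap.proj i).comp (Matrix.mulVecLin M) with hψdef
  set φ : (Fin d → ℝ) →ₗ[ℝ] ℝ := LinearMap.proj i with hφdef
  have hψapp : ∀ x, ψ x = M.mulVec x i := fun x => rfl
  have hφapp : ∀ x, φ x = x i := fun x => rfl
  have hψu : ψ (Pi.single j 1) ≠ 0 := by
    rw [hψapp]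
    simpa [Matrix.mulVec, dotProduct, Pi.single_apply] using hij
  have hφu : φ (Pi.single i 1) ≠ 0 := by
    rw [hφapp]; simp
  set A : ℝ := sInf (ψ '' W) with hA
  set Bv : ℝ := sSup (ψ '' W) with hBv
  set m0 : ℝ := sInf (φ '' W) with hm0
  set M0 : ℝ := sSup (φ '' W) with hM0
  have hL : 0 < Bv - A := sub_pos.mpr (width_pos' W hWc hWint ψ hψu)
  set L : ℝ := Bv - A with hLdef
  set q : ℝ := L / 4 with hq
  have hqpos : 0 < q := by positivity
  -- the 2 tail rectangles
  set s1 : Set (Fin d → ℝ) := {x | ψ x < A + q} with hs1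
  set t1 : Set (Fin d → ℝ) := {y | φ y < m0 + q} with ht1
  set s2 : Set (Fin d → ℝ) := {x | Bv - q < ψ x} with hs2
  set t2 : Set (Fin d → ℝ) := {y | M0 - q < φ y} with ht2
  have hψcont : Continuous ψ := ψ.continuous_of_finiteDimensional
  have hφcont : Continuous φ := φ.continuous_of_finiteDimensional
  have hs1meas : MeasurableSet s1 := (isOpen_lt hψcont continuous_const).measurableSet
  have ht1meas : MeasurableSet t1 := (isOpen_lt hφcont continuous_const).measurableSet
  have hs2meas : MeasurableSet s2 := (isOpen_lt continuous_const hψcont).measurableSet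
  have ht2meas : MeasurableSet t2 := (isOpen_lt continuous_const hφcont).measurableSet
  -- positivity of tails
  have hWne : W.Nonempty := ⟨_, interior_subset hWint.choose_spec⟩
  have hneg : ∀ g : (Fin d → ℝ) →ₗ[ℝ] ℝ, sInf ((-g) '' W) = -sSup (g '' W) := by
    intro g
    have h1 : (-g) '' W = -(g '' W) := by
      ext y
      simp only [Set.mem_image, LinearMap.neg_apply, Set.mem_neg]
      constructor
      · rintro ⟨x, hx, rfl⟩; exact ⟨x, hx, by ring⟩
      · rintro ⟨x, hx, hxy⟩; exact ⟨x, hx, by linarith⟩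
    rw [h1, Real.sInf_def, neg_neg]
  have hups2 : 0 < ν₀ s2 := by
    have h := tail_pos' W hWc hWconv hWint hκ f hfW (-ψ)
      (c := sInf ((-ψ) '' W) + q) (by linarith [hneg ψ])
    have : {x | (-ψ) x < sInf ((-ψ) '' W) + q} = s2 := by
      ext x
      rw [hneg ψ]
      simp only [LinearMap.neg_apply, Set.mem_setOf_eq, hs2]
      constructor <;> intro <;> [skip; skip] <;> linarith
    rwa [this] at h
  have hupt2 : 0 < ν₀ t2 := by
    have h := tail_pos' W hWc hWconv hWint hκ f hfW (-φ)
      (c := sInf ((-φ) '' W) + q) (by linarith [hneg φ])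
    have : {x | (-φ) x < sInf ((-φ) '' W) + q} = t2 := by
      ext x
      rw [hneg φ]
      simp only [LinearMap.neg_apply, Set.mem_setOf_eq, ht2]
      constructor <;> intro <;> [skip; skip] <;> linarith
    rwa [this] at h
  have hups1 : 0 < ν₀ s1 :=
    tail_pos' W hWc hWconv hWint hκ f hfW ψ (by linarith)
  have hupt1 : 0 < ν₀ t1 := by
    have hmM : m0 < M0 := width_pos' W hWc hWint φ hφu
    exact tail_pos' W hWc hWconv hWint hκ f hfW φ (by linarith)
  set ν : Measure ((Fin d → ℝ) × (Fin d → ℝ)) := ν₀.prod ν₀ with hν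
  haveI : IsProbabilityMeasure ν := by rw [hν]; infer_instance
  set δ : ℝ≥0∞ := min (ν (s1 ×ˢ t1)) (ν (s2 ×ˢ t2)) with hδ
  have hδpos : 0 < δ := by
    rw [hδ]
    refine lt_min ?_ ?_
    · rw [hν, Measure.prod_prod]; exact ENNReal.mul_pos hups1.ne' hupt1.ne'
    · rw [hν, Measure.prod_prod]; exact ENNReal.mul_pos hups2.ne' hupt2.ne'
  -- key measure bound
  have hbddψ : BddAbove (ψ '' W) := (hWc.image hψcont).bddAbove
  have hbddψ' : BddBelow (ψ '' W) := (hWc.image hψcont).bddBelow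
  have hbddφ : BddAbove (φ '' W) := (hWc.image hφcont).bddAbove
  have hbddφ' : BddBelow (φ '' W) := (hWc.image hφcont).bddBelow
  have hWmeas : MeasurableSet W := hWc.isClosed.measurableSet
  have hkeyν : ∀ z : Fin d → ℝ,
      ν {p : (Fin d → ℝ) × (Fin d → ℝ) | M.mulVec p.1 + p.2 + z ∈ W} ≤ 1 - δ := by
    intro z
    set S : Set ((Fin d → ℝ) × (Fin d → ℝ)) := {p | M.mulVec p.1 + p.2 + z ∈ W} with hS
    have hSmeas : MeasurableSet S := by
      have hcont : Continuous fun p : (Fin d → ℝ) × (Fin d → ℝ) =>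
          M.mulVec p.1 + p.2 + z := by
        apply Continuous.add (Continuous.add ?_ continuous_snd) continuous_const
        exact (Matrix.mulVecLin M).continuous_of_finiteDimensional.comp continuous_fst
      exact hcont.measurable hWmeas
    have hφmem : ∀ p ∈ S, m0 ≤ ψ p.1 + φ p.2 + z i ∧ ψ p.1 + φ p.2 + z i ≤ M0 := by
      intro p hp
      have hmem : M.mulVec p.1 + p.2 + z ∈ W := hp
      have hval : φ (M.mulVec p.1 + p.2 + z) = ψ p.1 + φ p.2 + z i := by
        simp [hφapp, hψapp]
      constructor
      · rw [← hval]; exact csInf_le hbddφ' ⟨_, hmem, rfl⟩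
      · rw [← hval]; exact le_csSup hbddφ ⟨_, hmem, rfl⟩
    have key : ∃ R, (MeasurableSet R ∧ δ ≤ ν R) ∧ Disjoint S R := by
      by_cases hz : z i ≤ -A - L / 2
      · refine ⟨s1 ×ˢ t1, ⟨hs1meas.prod ht1meas, min_le_left _ _⟩, ?_⟩
        rw [Set.disjoint_left]
        rintro p hp ⟨hp1, hp2⟩
        have h1 := (hφmem p hp).1
        simp only [hs1, Set.mem_setOf_eq] at hp1
        simp only [ht1, Set.mem_setOf_eq] at hp2
        have : q + q = L / 2 := by rw [hq]; ring
        linarith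
      · push_neg at hz
        refine ⟨s2 ×ˢ t2, ⟨hs2meas.prod ht2meas, min_le_right _ _⟩, ?_⟩
        rw [Set.disjoint_left]
        rintro p hp ⟨hp1, hp2⟩
        have h1 := (hφmem p hp).2
        simp only [hs2, Set.mem_setOf_eq] at hp1
        simp only [ht2, Set.mem_setOf_eq] at hp2
        have hBA : Bv = A + L := by rw [hLdef]; ring
        have : q + q = L / 2 := by rw [hq]; ring
        linarith
    obtain ⟨R, ⟨hRmeas, hRν⟩, hdisj⟩ := key
    have hsum : ν S + ν R ≤ 1 := by
      rw [← measure_union hdisj hRmeas]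
      exact prob_le_one
    have : ν S ≤ 1 - ν R := ENNReal.le_sub_of_add_le_right (measure_ne_top _ _) hsum
    exact this.trans (tsub_le_tsub_left hRν 1)
  -- filtration
  set F : ℕ → MeasurableSpace Ω :=
    fun n => ⨆ i ∈ Finset.range n, MeasurableSpace.comap (w i) inferInstance with hF
  have hFle : ∀ n, F n ≤ ‹MeasurableSpace Ω› := by
    intro n
    exact iSup₂_le fun i _ => (hw i).comap_le
  have hFmono : Monotone F := by
    intro a b hab
    exact biSup_mono fun i hi => Finset.mem_range.mpr ((Finset.mem_range.mp hi).trans_le hab)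
  have hwF : ∀ i n, i < n → Measurable[F n] (w i) := by
    intro i n hin
    exact measurable_iff_comap_le.mpr
      (le_biSup (fun i => MeasurableSpace.comap (w i) inferInstance) (Finset.mem_range.mpr hin))
  have hZF : ∀ k, Measurable[F (2 * k)] (Z k) := by
    intro k
    rcases k with _ | k
    · obtain ⟨c, hc⟩ := hZ0
      have : Z 0 = fun _ => c := funext hc
      rw [this]
      exact measurable_const
    · exact hZ (k + 1) (by omega)
  have hZmeas : ∀ k, Measurable (Z k) := fun k => (hZF k).mono (hFle _) le_rfl
  -- the "good" events
  set Ac : ℕ → Set Ω := fun k =>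
    {ω | M.mulVec (w (2 * k) ω) + w (2 * k + 1) ω + Z k ω ∈ W} with hAc
  have hmulVec : Measurable fun v : Fin d → ℝ => M.mulVec v :=
    (Matrix.mulVecLin M).continuous_of_finiteDimensional.measurable
  have hAcF : ∀ k n, 2 * k + 2 ≤ n → MeasurableSet[F n] (Ac k) := by
    intro k n hkn
    have h1 : Measurable[F n] (w (2 * k)) := hwF _ _ (by omega)
    have h2 : Measurable[F n] (w (2 * k + 1)) := hwF _ _ (by omega)
    have h3 : Measurable[F n] (Z k) := (hZF k).mono (hFmono (by omega)) le_rfl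
    have hmap : Measurable[F n] fun ω => M.mulVec (w (2 * k) ω) + w (2 * k + 1) ω + Z k ω :=
      ((hmulVec.comp h1).add h2).add h3
    exact hmap hWmeas
  have hAcmeas : ∀ k, MeasurableSet (Ac k) := fun k => hFle _ _ (hAcF k (2 * k + 2) le_rfl)
  -- key conditional step
  have hkey : ∀ N (B : Set Ω), MeasurableSet[F (2 * N)] B →
      P (B ∩ Ac N) ≤ (1 - δ) * P B := by
    intro N B hB
    have hBmeas : MeasurableSet B := hFle _ _ hB
    set X' : Ω → (Fin d → ℝ) × ℝ :=
      fun ω => (Z N ω, Set.indicator B (fun _ => (1 : ℝ)) ω) with hX'def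
    have hX'F : Measurable[F (2 * N)] X' :=
      (hZF N).prodMk (measurable_const.indicator hB)
    have hX' : Measurable X' := hX'F.mono (hFle _) le_rfl
    set V : Ω → (Fin d → ℝ) × (Fin d → ℝ) :=
      fun ω => (w (2 * N) ω, w (2 * N + 1) ω) with hVdef
    have hV : Measurable V := (hw _).prodMk (hw _)
    -- independence
    have hdisjST : Disjoint (Finset.range (2 * N)) ({2 * N, 2 * N + 1} : Finset ℕ) := by
      rw [Finset.disjoint_left]
      intro a ha hb
      simp only [Finset.mem_range] at ha
      simp only [Finset.mem_insert, Finset.mem_singleton] at hb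
      omega
    have hIndepWV := hindep.indepFun_finset (Finset.range (2 * N))
      ({2 * N, 2 * N + 1} : Finset ℕ) hdisjST hw
    have hIndep₂ : Indep (F (2 * N)) (MeasurableSpace.comap V inferInstance) P := by
      have h := (IndepFun_iff_Indep _ _ _).mp hIndepWV
      refine indep_mono' h ?_ ?_
      · refine iSup₂_le fun k hk => ?_
        have : w k = (fun u : (Finset.range (2 * N) : Finset ℕ) → (Fin d → ℝ) =>
            u ⟨k, hk⟩) ∘ (fun a (i : (Finset.range (2 * N) : Finset ℕ)) => w i a) := rfl
        rw [this, ← MeasurableSpace.comap_comp]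
        exact MeasurableSpace.comap_mono (measurable_pi_apply _).comap_le
      · have : V = (fun u : (({2 * N, 2 * N + 1} : Finset ℕ) : Finset ℕ) → (Fin d → ℝ) =>
            (u ⟨2 * N, by simp⟩, u ⟨2 * N + 1, by simp⟩)) ∘
            (fun a (i : (({2 * N, 2 * N + 1} : Finset ℕ) : Finset ℕ)) => w i a) := rfl
        rw [this, ← MeasurableSpace.comap_comp]
        exact MeasurableSpace.comap_mono
          ((measurable_pi_apply _).prodMk (measurable_pi_apply _)).comap_le
    have hIndepX'V : IndepFun X' V P :=
      (IndepFun_iff_Indep _ _ _).mpr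
        (indep_mono' hIndep₂ (measurable_iff_comap_le.mp hX'F) le_rfl)
    -- law of V
    have hVlaw : P.map V = ν := by
      have hWW : IndepFun (w (2 * N)) (w (2 * N + 1)) P := hindep.indepFun (by omega)
      have h := (indepFun_iff_map_prod_eq_prod_map_map (hw (2 * N)).aemeasurable
        (hw (2 * N + 1)).aemeasurable).mp hWW
      rw [hlaw (2 * N), hlaw (2 * N + 1)] at h
      exact h
    have hXVlaw : P.map (fun ω => (X' ω, V ω)) = (P.map X').prod (P.map V) :=
      (indepFun_iff_map_prod_eq_prod_map_map hX'.aemeasurable hV.aemeasurable).mp hIndepX'V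
    -- target set
    set T : Set (((Fin d → ℝ) × ℝ) × ((Fin d → ℝ) × (Fin d → ℝ))) :=
      {p | p.1.2 = 1 ∧ M.mulVec p.2.1 + p.2.2 + p.1.1 ∈ W} with hT
    have hTmeas : MeasurableSet T := by
      have hc1 : MeasurableSet {p : ((Fin d → ℝ) × ℝ) × ((Fin d → ℝ) × (Fin d → ℝ)) |
          p.1.2 = 1} := (measurable_snd.comp measurable_fst) (measurableSet_singleton (1 : ℝ))
      have hc2 : Measurable fun p : ((Fin d → ℝ) × ℝ) × ((Fin d → ℝ) × (Fin d → ℝ)) =>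
          M.mulVec p.2.1 + p.2.2 + p.1.1 :=
        ((hmulVec.comp (measurable_fst.comp measurable_snd)).add
          (measurable_snd.comp measurable_snd)).add (measurable_fst.comp measurable_fst)
      exact hc1.inter (hc2 hWmeas)
    -- rewrite the event as a preimage
    have hpre : B ∩ Ac N = (fun ω => (X' ω, V ω)) ⁻¹' T := by
      ext ω
      simp only [Set.mem_inter_iff, Set.mem_preimage, hT, Set.mem_setOf_eq, hX'def, hVdef,
        hAc, Set.indicator_apply]
      constructor
      · rintro ⟨hωB, hωA⟩
        refine ⟨by simp [hωB], hωA⟩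
      · rintro ⟨h1, h2⟩
        by_cases hωB : ω ∈ B
        · exact ⟨hωB, h2⟩
        · simp [hωB] at h1
    have hcalc : P (B ∩ Ac N) = ∫⁻ a, (P.map V) (Prod.mk a ⁻¹' T) ∂(P.map X') := by
      rw [hpre, ← Measure.map_apply (hX'.prodMk hV) hTmeas, hXVlaw,
        Measure.prod_apply hTmeas]
    have hslice : ∀ a : (Fin d → ℝ) × ℝ,
        (P.map V) (Prod.mk a ⁻¹' T) ≤
          Set.indicator {a : (Fin d → ℝ) × ℝ | a.2 = 1} (fun _ => 1 - δ) a := by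
      intro a
      by_cases ha : a.2 = 1
      · have heq : Prod.mk a ⁻¹' T =
            {p : (Fin d → ℝ) × (Fin d → ℝ) | M.mulVec p.1 + p.2 + a.1 ∈ W} := by
          ext p
          simp [hT, ha]
        rw [heq, hVlaw, Set.indicator_of_mem (by exact ha)]
        exact hkeyν a.1
      · have heq : Prod.mk a ⁻¹' T = (∅ : Set ((Fin d → ℝ) × (Fin d → ℝ))) := by
          ext p
          simp [hT, ha]
        rw [heq]
        simp
    have hind : ∫⁻ a, (P.map V) (Prod.mk a ⁻¹' T) ∂(P.map X') ≤
        ∫⁻ a, Set.indicator {a : (Fin d → ℝ) × ℝ | a.2 = 1} (fun _ => 1 - δ) a ∂(P.map X') :=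
      lintegral_mono hslice
    have hsetmeas : MeasurableSet {a : (Fin d → ℝ) × ℝ | a.2 = 1} :=
      measurable_snd (measurableSet_singleton (1 : ℝ))
    have hpreB : X' ⁻¹' {a : (Fin d → ℝ) × ℝ | a.2 = 1} = B := by
      ext ω
      simp only [Set.mem_preimage, hX'def, Set.mem_setOf_eq, Set.indicator_apply]
      by_cases hωB : ω ∈ B <;> simp [hωB]
    have hfinal : ∫⁻ a, Set.indicator {a : (Fin d → ℝ) × ℝ | a.2 = 1}
        (fun _ => 1 - δ) a ∂(P.map X') = (1 - δ) * P B := by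
      rw [lintegral_indicator hsetmeas, setLIntegral_const,
        Measure.map_apply hX' hsetmeas, hpreB]
    calc P (B ∩ Ac N) = ∫⁻ a, (P.map V) (Prod.mk a ⁻¹' T) ∂(P.map X') := hcalc
      _ ≤ _ := hind
      _ = (1 - δ) * P B := hfinal
  -- iterate the key step
  have hiter : ∀ n m : ℕ, P (⋂ k ∈ Finset.Ico n (n + m), Ac k) ≤ (1 - δ) ^ m := by
    intro n m
    induction m with
    | zero =>
      simp only [Nat.add_zero, Finset.Ico_self]
      simp
    | succ m ih =>
      have hins : Finset.Ico n (n + (m + 1)) = insert (n + m) (Finset.Ico n (n + m)) := by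
        rw [← Nat.add_assoc]
        exact Nat.Ico_succ_right_eq_insert_Ico (by omega)
      rw [hins]
      have hbi : (⋂ k ∈ insert (n + m) (Finset.Ico n (n + m)), Ac k) =
          (⋂ k ∈ Finset.Ico n (n + m), Ac k) ∩ Ac (n + m) := by
        rw [Finset.set_biInter_insert, Set.inter_comm]
      rw [hbi]
      have hGmeas : MeasurableSet[F (2 * (n + m))] (⋂ k ∈ Finset.Ico n (n + m), Ac k) := by
        refine MeasurableSet.biInter (Finset.Ico n (n + m)).countable_toSet fun k hk => ?_
        have hk' := Finset.mem_Ico.mp hk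
        exact hAcF k _ (by omega)
      calc P ((⋂ k ∈ Finset.Ico n (n + m), Ac k) ∩ Ac (n + m))
          ≤ (1 - δ) * P (⋂ k ∈ Finset.Ico n (n + m), Ac k) := hkey (n + m) _ hGmeas
        _ ≤ (1 - δ) * (1 - δ) ^ m := mul_le_mul_right ih _
        _ = (1 - δ) ^ (m + 1) := (pow_succ' _ _).symm
  -- tails are null
  have h1δ : (1 - δ) < 1 := ENNReal.sub_lt_self ENNReal.one_ne_top one_ne_zero hδpos.ne'
  have htail : ∀ n : ℕ, P (⋂ (k : ℕ) (_ : n ≤ k), Ac k) = 0 := by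
    intro n
    have hbound : ∀ m : ℕ, P (⋂ (k : ℕ) (_ : n ≤ k), Ac k) ≤ (1 - δ) ^ m := by
      intro m
      refine le_trans (measure_mono ?_) (hiter n m)
      intro ω hω
      simp only [Set.mem_iInter] at hω ⊢
      intro k hk
      exact hω k (Finset.mem_Ico.mp hk).1
    have htend : Filter.Tendsto (fun m : ℕ => (1 - δ) ^ m) Filter.atTop (nhds 0) :=
      ENNReal.tendsto_pow_atTop_nhds_zero_of_lt_one h1δ
    exact le_antisymm (ge_of_tendsto' htend hbound) zero_le
  -- conclusion
  have hunion : P (⋃ n : ℕ, ⋂ (k : ℕ) (_ : n ≤ k), Ac k) = 0 :=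
    measure_iUnion_null fun n => htail n
  rw [MeasureTheory.ae_iff]
  refine measure_mono_null ?_ hunion
  intro ω hω
  simp only [Set.mem_setOf_eq] at hω
  have hfin : {k : ℕ | M.mulVec (w (2 * k) ω) + w (2 * k + 1) ω + Z k ω ∉ W}.Finite :=
    Set.not_infinite.mp hω
  obtain ⟨n, hn⟩ := hfin.bddAbove
  refine Set.mem_iUnion.mpr ⟨n + 1, ?_⟩
  simp only [Set.mem_iInter]
  intro k hk
  have hknot : k ∉ {k : ℕ | M.mulVec (w (2 * k) ω) + w (2 * k + 1) ω + Z k ω ∉ W} := by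
    intro hmem
    exact absurd (hn hmem) (by omega)
  simpa [hAc, Set.mem_setOf_eq, not_not] using hknot
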